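/- Let K be a cone field on a topological real vector bundle (E,p,M) over a paracompact topological manifold M without boundary. Then there exists a continuous section ζ of E such that ζ(x) lies in the interior of K(x) in the fiber E_x for every x ∈ M (equivalently, the cone K⁰_Γ of positive continuous sections is solid, i.e. has nonempty interior in the graph topology). -/
import Mathlib


open Bundle Topology Set

/-- A *cone field* on a topological real vector bundle `(E, p, M)`:
to each `x ∈ M` it assigns a subset `K x` of the fiber `E x` such that
(K1) each `K x` is a convex cone, closed in the fiber, pointed and solid, and
(K2) the union of the fiberwise interiors and the union of the fiberwise
complements are open in the total space. -/
structure IsConeField (F : Type*) [NormedAddCommGroup F] [NormedSpace ℝ F]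
    {M : Type*} [TopologicalSpace M]
    (E : M → Type*) [∀ x, AddCommGroup (E x)] [∀ x, Module ℝ (E x)]
    [∀ x, TopologicalSpace (E x)] [TopologicalSpace (Bundle.TotalSpace F E)]
    [FiberBundle F E] [VectorBundle ℝ F E]
    (K : ∀ x, Set (E x)) : Prop where
  add_mem : ∀ x, ∀ v ∈ K x, ∀ w ∈ K x, v + w ∈ K x
  smul_mem : ∀ x, ∀ c : ℝ, 0 ≤ c → ∀ v ∈ K x, c • v ∈ K x
  isClosed : ∀ x, IsClosed (K x)
  pointed : ∀ x, K x ∩ -(K x) = {0}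
  solid : ∀ x, (interior (K x)).Nonempty
  isOpen_int : IsOpen {p : Bundle.TotalSpace F E | p.2 ∈ interior (K p.proj)}
  isOpen_compl : IsOpen {p : Bundle.TotalSpace F E | p.2 ∉ K p.proj}

variable (F : Type*) [NormedAddCommGroup F] [NormedSpace ℝ F]
  {M : Type*} [TopologicalSpace M]
  (E : M → Type*) [∀ x, AddCommGroup (E x)] [∀ x, Module ℝ (E x)]
  [∀ x, TopologicalSpace (E x)] [TopologicalSpace (Bundle.TotalSpace F E)]
  [FiberBundle F E] [VectorBundle ℝ F E]

/-- A (set-theoretic) section `σ` of the bundle is a *continuous section*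
if `x ↦ (x, σ x)` is continuous into the total space. -/
def IsContSection (σ : ∀ x, E x) : Prop :=
  Continuous (fun x => (⟨x, σ x⟩ : Bundle.TotalSpace F E))

variable {F E} in
/-- `σ` is a *positive section* for the cone field `K` if `σ x ∈ K x` for all `x`. -/
def IsPosSection (K : ∀ x, Set (E x)) (σ : ∀ x, E x) : Prop :=
  ∀ x, σ x ∈ K x

variable {F E} in
/-- The order relation on sections induced by the cone of positive sections:
`σ₁ ≤ σ₂` iff `σ₂ - σ₁` is a positive section. -/
def ConeLE (K : ∀ x, Set (E x)) (σ₁ σ₂ : ∀ x, E x) : Prop :=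
  ∀ x, σ₂ x - σ₁ x ∈ K x

variable {F E} in
/-- `σ` is *`ζ`-measurable*: there is `λ ≥ 0` with `-λ ζ ≤ σ ≤ λ ζ` in the cone order. -/
def IsZetaMeas (K : ∀ x, Set (E x)) (ζ σ : ∀ x, E x) : Prop :=
  ∃ lam : ℝ, 0 ≤ lam ∧ ConeLE K (fun x => (-lam) • ζ x) σ ∧ ConeLE K σ (fun x => lam • ζ x)

variable {F E} in
/-- The norm `|σ|⁰_ζ = min {λ ≥ 0 | -λζ ≤ σ ≤ λζ}` (as an infimum; the
minimum is attained, see the corresponding statement). -/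
noncomputable def zetaNorm (K : ∀ x, Set (E x)) (ζ σ : ∀ x, E x) : ℝ :=
  sInf {lam : ℝ | 0 ≤ lam ∧ ConeLE K (fun x => (-lam) • ζ x) σ ∧ ConeLE K σ (fun x => lam • ζ x)}

/-- The graph (Whitney `C⁰`) topology `WO⁰`, generated by the sets
`W(U) = {σ | ∀ x, (x, σ x) ∈ U}` for `U` open in the total space. -/
def WO0 : TopologicalSpace (∀ x, E x) :=
  TopologicalSpace.generateFrom
    {S | ∃ U : Set (Bundle.TotalSpace F E), IsOpen U ∧
      S = {σ : ∀ x, E x | ∀ x, (⟨x, σ x⟩ : Bundle.TotalSpace F E) ∈ U}}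

/-- The space `Γ⁰(E)` of continuous sections of the bundle. -/
def ContSection : Type _ := {σ : ∀ x, E x // IsContSection F E σ}

include F in
/-- Convexity transfers through a trivialization: the interior of a convex subset of a
fiber is convex. -/
theorem convex_interior_of_convex_fiber (x : M) {S : Set (E x)} (hS : Convex ℝ S) :
    Convex ℝ (interior S) := by
  have hb := FiberBundle.mem_baseSet_trivializationAt' (F := F) (E := E) x
  let L := (trivializationAt F E x).continuousLinearEquivAt ℝ x hb
  have himg : Convex ℝ (interior (⇑L '' S)) :=
    (hS.linear_image (L : E x →ₗ[ℝ] F)).interior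
  have hpre : interior S = ⇑L ⁻¹' interior (⇑L '' S) := by
    have := L.toHomeomorph.preimage_interior (⇑L '' S)
    simp only [ContinuousLinearEquiv.coe_toHomeomorph] at this
    rw [this, Set.preimage_image_eq _ L.injective]
  rw [hpre]
  exact himg.linear_preimage (L : E x →ₗ[ℝ] F)

/-- For a cone field `K` on a topological real vector bundle over a
paracompact topological manifold `M` without boundary, there exists a continuous
section `ζ` with `ζ x ∈ Int (K x)` for every `x` (so the cone of positive continuous
sections is solid). -/
theorem exists_contSection_mem_interior_coneField
    {n : ℕ} [ChartedSpace (EuclideanSpace ℝ (Fin n)) M] [T2Space M] [ParacompactSpace M]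
    (K : ∀ x, Set (E x)) (hK : IsConeField F E K) :
    ∃ ζ : ∀ x, E x, IsContSection F E ζ ∧ ∀ x, ζ x ∈ interior (K x) := by
  classical
  -- choose an interior point in each fiber
  choose v hv using hK.solid
  -- the candidate local sections: transport `v c` by the trivialization at `c`
  set w : M → F := fun c => ((trivializationAt F E c) ⟨c, v c⟩).2 with hw
  set σ : ∀ c : M, ∀ y : M, E y := fun c y => (trivializationAt F E c).symm y (w c) with hσ
  have hσc : ∀ c, σ c c = v c := fun c =>
    (trivializationAt F E c).symm_apply_apply_mk (mem_baseSet_trivializationAt F E c) (v c)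
  -- continuity of the local sections on the base sets
  have hcontσ : ∀ c, ContinuousOn (fun y => (⟨y, σ c y⟩ : Bundle.TotalSpace F E))
      (trivializationAt F E c).baseSet := by
    intro c
    have h1 : Continuous fun y : M => (y, w c) := continuous_id.prodMk continuous_const
    have := (trivializationAt F E c).continuousOn_symm.comp h1.continuousOn
      (fun y hy => ⟨hy, mem_univ _⟩)
    exact this
  -- the open sets on which the local sections take values in the cone interiors
  set U : M → Set M := fun c => (trivializationAt F E c).baseSet ∩
    (fun y => (⟨y, σ c y⟩ : Bundle.TotalSpace F E)) ⁻¹'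
      {p : Bundle.TotalSpace F E | p.2 ∈ interior (K p.proj)} with hU
  have hUo : ∀ c, IsOpen (U c) := fun c =>
    (hcontσ c).isOpen_inter_preimage (trivializationAt F E c).open_baseSet hK.isOpen_int
  have hUc : ∀ c, c ∈ U c := by
    intro c
    refine ⟨mem_baseSet_trivializationAt F E c, ?_⟩
    show σ c c ∈ interior (K c)
    rw [hσc c]
    exact hv c
  have hUmem : ∀ c, ∀ y ∈ U c, σ c y ∈ interior (K y) := fun c y hy => hy.2
  have hUbase : ∀ c, U c ⊆ (trivializationAt F E c).baseSet := fun c => inter_subset_left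
  -- a partition of unity subordinate to the cover `U`
  obtain ⟨f, hf⟩ := PartitionOfUnity.exists_isSubordinate isClosed_univ U hUo
    (fun x _ => mem_iUnion.2 ⟨x, hUc x⟩)
  -- the global section
  refine ⟨fun x => ∑ᶠ c, f c x • σ c x, ?_, ?_⟩
  · -- continuity
    rw [IsContSection, continuous_iff_continuousAt]
    intro x₀
    obtain ⟨N, hN, hNfin⟩ := f.locallyFinite x₀
    set s : Finset M := hNfin.toFinset with hs
    have hb₀ : x₀ ∈ (trivializationAt F E x₀).baseSet := mem_baseSet_trivializationAt F E x₀
    set e₀ := trivializationAt F E x₀ with he₀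
    -- on `N`, the section is a finite sum
    have hsum : ∀ y ∈ N, (∑ᶠ c, f c y • σ c y) = ∑ c ∈ s, f c y • σ c y := by
      intro y hy
      refine finsum_eq_finset_sum_of_support_subset _ fun c hc => ?_
      have hfc : f c y ≠ 0 := by
        intro h0
        apply hc
        simp [h0]
      have hcmem : c ∈ {i | (Function.support ⇑(f i) ∩ N).Nonempty} := ⟨y, hfc, hy⟩
      simpa [hs, Set.Finite.coe_toFinset] using hcmem
    rw [FiberBundle.continuousAt_totalSpace]
    refine ⟨continuousAt_id, ?_⟩
    -- eventual equality with a sum of continuous functions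
    have heq : ∀ y ∈ N ∩ e₀.baseSet,
        ((e₀ ⟨y, ∑ᶠ c, f c y • σ c y⟩).2 : F)
          = ∑ c ∈ s, f c y • (e₀.continuousLinearMapAt ℝ y (σ c y)) := by
      intro y hy
      have h1 : ∀ z : E y, (e₀ ⟨y, z⟩).2 = e₀.continuousLinearMapAt ℝ y z := by
        intro z
        simp [e₀.continuousLinearMapAt_apply (R := ℝ), e₀.coe_linearMapAt_of_mem (R := ℝ) hy.2]
      rw [h1, hsum y hy.1, map_sum]
      exact Finset.sum_congr rfl fun c _ => by rw [map_smul]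
    have hmemN : N ∩ e₀.baseSet ∈ 𝓝 x₀ :=
      Filter.inter_mem hN (e₀.open_baseSet.mem_nhds hb₀)
    have hc2 : ContinuousAt
        (fun y => ∑ c ∈ s, f c y • (e₀.continuousLinearMapAt ℝ y (σ c y))) x₀ := by
      refine tendsto_finset_sum s fun c _ => ?_
      by_cases hcx : x₀ ∈ tsupport (f c)
      · -- here `x₀` is in the base set of the trivialization at `c`
        have hx₀Uc : x₀ ∈ U c := hf c hcx
        set V : Set M := e₀.baseSet ∩ (trivializationAt F E c).baseSet with hV
        have hVo : IsOpen V := e₀.open_baseSet.inter (trivializationAt F E c).open_baseSet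
        have hx₀V : x₀ ∈ V := ⟨hb₀, hUbase c hx₀Uc⟩
        have hcont2 : ContinuousOn (fun y => ((e₀ ⟨y, σ c y⟩).2 : F)) V := by
          have h2 : ContinuousOn (fun y => (e₀ (⟨y, σ c y⟩ : Bundle.TotalSpace F E))) V := by
            refine e₀.continuousOn.comp ((hcontσ c).mono inter_subset_right) ?_
            intro y hy
            rw [e₀.mem_source]
            exact hy.1
          exact continuous_snd.comp_continuousOn h2
        have hcont3 : ContinuousOn (fun y => (e₀.continuousLinearMapAt ℝ y (σ c y) : F)) V := by
          refine hcont2.congr fun y hy => ?_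
          simp [e₀.continuousLinearMapAt_apply (R := ℝ), e₀.coe_linearMapAt_of_mem (R := ℝ) hy.1]
        have hcont4 : ContinuousOn
            (fun y => f c y • (e₀.continuousLinearMapAt ℝ y (σ c y)) : M → F) V :=
          ((f c).continuous.continuousOn).smul hcont3
        exact (hcont4.continuousAt (hVo.mem_nhds hx₀V))
      · -- here `f c` vanishes near `x₀`
        have h0 : ∀ᶠ y in 𝓝 x₀, f c y • (e₀.continuousLinearMapAt ℝ y (σ c y)) = (0 : F) := by
          filter_upwards [(isClosed_tsupport (f c)).isOpen_compl.mem_nhds hcx] with y hy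
          rw [image_eq_zero_of_notMem_tsupport hy, zero_smul]
        exact continuousAt_const.congr (by filter_upwards [h0] with y hy using hy.symm)
    exact hc2.congr (by filter_upwards [hmemN] with y hy using (heq y hy).symm)
  · -- fiberwise membership in the interior of the cone
    intro x
    have hKconv : Convex ℝ (K x) := by
      intro a ha b hb ta tb hta htb htab
      exact hK.add_mem x _ (hK.smul_mem x ta hta a ha) _ (hK.smul_mem x tb htb b hb)
    refine (convex_interior_of_convex_fiber F E x hKconv).finsum_mem
      (fun c => f.nonneg c x) (f.sum_eq_one (mem_univ x)) (fun c hc => ?_)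
    exact hUmem c x (hf c (subset_tsupport (f c) hc))
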